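/- Let μ be the probability measure on ℝ with density x ↦ (1/√(2π)) x^{−3/2} e^{−1/(2x)} on (0,∞) and density 0 on (−∞, 0]. Then the characteristic function of μ satisfies ∫_ℝ e^{iξx} μ(dx) = exp(−|ξ|^{1/2} (1 − i·sgn(ξ))) for all ξ ∈ ℝ; that is, μ is the one-sided stable distribution of exponent 1/2. -/

import Mathlib

open MeasureTheory Real Filter Topology

lemma gauss_integrableOn : IntegrableOn (fun u : ℝ => Real.exp (-u ^ 2)) (Set.Ioi 0) := by
  have h := (integrable_exp_neg_mul_sq (b := (1:ℝ)) one_pos)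
  simpa using h.integrableOn

lemma glasserA_integrable (c : ℝ) :
    IntegrableOn (fun u : ℝ => Real.exp (-u ^ 2 - c ^ 2 / u ^ 2)) (Set.Ioi 0) := by
  apply gauss_integrableOn.mono'
  · apply Measurable.aestronglyMeasurable
    fun_prop
  · filter_upwards [ae_restrict_mem measurableSet_Ioi] with u hu
    rw [Real.norm_eq_abs, abs_of_pos (Real.exp_pos _)]
    apply Real.exp_le_exp.2
    have : 0 ≤ c ^ 2 / u ^ 2 := by positivity
    linarith


-- change of variables u ↦ c/u maps Ioi 0 onto Ioi 0
lemma inv_image (c : ℝ) (hc : 0 < c) :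
    (fun u : ℝ => c / u) '' Set.Ioi 0 = Set.Ioi 0 := by
  ext t
  constructor
  · rintro ⟨u, hu, rfl⟩
    exact div_pos hc hu
  · intro ht
    exact ⟨c / t, div_pos hc ht, by field_simp⟩

lemma glasser_B_eq_A (c : ℝ) (hc : 0 < c) :
    ∫ u in Set.Ioi (0:ℝ), Real.exp (-u ^ 2 - c ^ 2 / u ^ 2) =
      ∫ u in Set.Ioi (0:ℝ), (c / u ^ 2) * Real.exp (-u ^ 2 - c ^ 2 / u ^ 2) := by
  have hder : ∀ u ∈ Set.Ioi (0:ℝ),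
      HasDerivWithinAt (fun u : ℝ => c / u) (-(c / u ^ 2)) (Set.Ioi 0) u := by
    intro u hu
    have h1 : HasDerivAt (fun u : ℝ => c / u) (c * (-(u ^ 2)⁻¹)) u := by
      simpa [div_eq_mul_inv] using (hasDerivAt_inv (ne_of_gt hu)).const_mul c
    have : c * (-(u ^ 2)⁻¹) = -(c / u ^ 2) := by field_simp
    exact (this ▸ h1).hasDerivWithinAt
  have hinj : Set.InjOn (fun u : ℝ => c / u) (Set.Ioi 0) := by
    intro u hu v hv h
    simp only [Set.mem_Ioi] at hu hv
    field_simp at h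
    rcases h with h | h
    · linarith
  have key := MeasureTheory.integral_image_eq_integral_abs_deriv_smul
    measurableSet_Ioi hder hinj (fun t => Real.exp (-t ^ 2 - c ^ 2 / t ^ 2))
  rw [inv_image c hc] at key
  rw [key]
  apply setIntegral_congr_fun measurableSet_Ioi
  intro u hu
  simp only [Set.mem_Ioi] at hu
  have h1 : |(-(c / u ^ 2))| = c / u ^ 2 := by
    rw [abs_neg, abs_of_pos (by positivity)]
  have h2 : -(c / u) ^ 2 - c ^ 2 / (c / u) ^ 2 = -u ^ 2 - c ^ 2 / u ^ 2 := by
    have hc' : c ≠ 0 := ne_of_gt hc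
    have hu' : u ≠ 0 := ne_of_gt hu
    field_simp
    ring
  show |(-(c / u ^ 2))| • Real.exp (-(c / u) ^ 2 - c ^ 2 / (c / u) ^ 2) = _
  rw [h1, h2, smul_eq_mul]


lemma inv_hasDeriv (c : ℝ) : ∀ u ∈ Set.Ioi (0:ℝ),
    HasDerivWithinAt (fun u : ℝ => c / u) (-(c / u ^ 2)) (Set.Ioi 0) u := by
  intro u hu
  have h1 : HasDerivAt (fun u : ℝ => c / u) (c * (-(u ^ 2)⁻¹)) u := by
    simpa [div_eq_mul_inv] using (hasDerivAt_inv (ne_of_gt hu)).const_mul c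
  have : c * (-(u ^ 2)⁻¹) = -(c / u ^ 2) := by field_simp
  exact (this ▸ h1).hasDerivWithinAt

lemma inv_injOn (c : ℝ) (hc : 0 < c) : Set.InjOn (fun u : ℝ => c / u) (Set.Ioi 0) := by
  intro u hu v hv h
  simp only [Set.mem_Ioi] at hu hv
  field_simp at h
  rcases h with h | h
  · linarith

lemma glasser_eqOn (c : ℝ) (hc : 0 < c) : Set.EqOn
    (fun u : ℝ => |(-(c / u ^ 2))| • Real.exp (-(c / u) ^ 2 - c ^ 2 / (c / u) ^ 2))
    (fun u : ℝ => (c / u ^ 2) * Real.exp (-u ^ 2 - c ^ 2 / u ^ 2)) (Set.Ioi 0) := by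
  intro u hu
  simp only [Set.mem_Ioi] at hu
  have h1 : |(-(c / u ^ 2))| = c / u ^ 2 := by
    rw [abs_neg, abs_of_pos (by positivity)]
  have h2 : -(c / u) ^ 2 - c ^ 2 / (c / u) ^ 2 = -u ^ 2 - c ^ 2 / u ^ 2 := by
    have hc' : c ≠ 0 := ne_of_gt hc
    have hu' : u ≠ 0 := ne_of_gt hu
    field_simp
    ring
  show |(-(c / u ^ 2))| • Real.exp (-(c / u) ^ 2 - c ^ 2 / (c / u) ^ 2) = _
  rw [h1, h2, smul_eq_mul]

lemma glasserB_integrable (c : ℝ) (hc : 0 < c) :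
    IntegrableOn (fun u : ℝ => (c / u ^ 2) * Real.exp (-u ^ 2 - c ^ 2 / u ^ 2)) (Set.Ioi 0) := by
  have key := (MeasureTheory.integrableOn_image_iff_integrableOn_abs_deriv_smul
    measurableSet_Ioi (inv_hasDeriv c) (inv_injOn c hc)
    (fun t => Real.exp (-t ^ 2 - c ^ 2 / t ^ 2))).1
  rw [inv_image c hc] at key
  exact ((key (glasserA_integrable c)).congr_fun (glasser_eqOn c hc) measurableSet_Ioi)

lemma psi_image (c : ℝ) (hc : 0 < c) :
    (fun u : ℝ => u - c / u) '' Set.Ioi 0 = Set.univ := by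
  apply Set.eq_univ_of_forall
  intro t
  have hs : 0 ≤ t ^ 2 + 4 * c := by positivity
  set s := Real.sqrt (t ^ 2 + 4 * c) with hs_def
  have hs2 : s ^ 2 = t ^ 2 + 4 * c := Real.sq_sqrt hs
  have hst : |t| < s := by
    nlinarith [Real.sqrt_nonneg (t ^ 2 + 4 * c), abs_nonneg t, sq_abs t]
  have hu : 0 < (t + s) / 2 := by
    rcases abs_lt.1 hst with ⟨h1, _⟩; linarith
  refine ⟨(t + s) / 2, hu, ?_⟩
  have hune : (t + s) / 2 ≠ 0 := ne_of_gt hu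
  have key : ((t + s) / 2) ^ 2 - t * ((t + s) / 2) - c = 0 := by
    linear_combination hs2 / 4
  have hdiv : c / ((t + s) / 2) = (t + s) / 2 - t := by
    rw [div_eq_iff hune]
    linear_combination -key
  show (t + s) / 2 - c / ((t + s) / 2) = t
  rw [hdiv]; ring


lemma glasser (c : ℝ) (hc : 0 ≤ c) :
    ∫ u in Set.Ioi (0:ℝ), Real.exp (-u ^ 2 - c ^ 2 / u ^ 2) =
      Real.sqrt π / 2 * Real.exp (-(2 * c)) := by
  rcases eq_or_lt_of_le hc with rfl | hc
  · have h : ∀ u ∈ Set.Ioi (0:ℝ),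
        Real.exp (-u ^ 2 - (0:ℝ) ^ 2 / u ^ 2) = Real.exp (-u ^ 2) := by
      intro u hu; norm_num
    rw [setIntegral_congr_fun measurableSet_Ioi h]
    have := integral_gaussian_Ioi (1:ℝ)
    simp only [one_mul, neg_mul] at this
    rw [this]
    norm_num
  · have hder : ∀ u ∈ Set.Ioi (0:ℝ),
        HasDerivWithinAt (fun u : ℝ => u - c / u) (1 + c / u ^ 2) (Set.Ioi 0) u := by
      intro u hu
      simp only [Set.mem_Ioi] at hu
      have h1 : HasDerivAt (fun u : ℝ => u - c / u) (1 - c * (-(u ^ 2)⁻¹)) u := by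
        exact (hasDerivAt_id u).sub (by
          simpa [div_eq_mul_inv] using (hasDerivAt_inv (ne_of_gt hu)).const_mul c :
            HasDerivAt (fun u : ℝ => c / u) (c * (-(u ^ 2)⁻¹)) u)
      have : 1 - c * (-(u ^ 2)⁻¹) = 1 + c / u ^ 2 := by field_simp; ring
      exact (this ▸ h1).hasDerivWithinAt
    have hinj : Set.InjOn (fun u : ℝ => u - c / u) (Set.Ioi 0) := by
      intro u hu v hv h
      simp only [Set.mem_Ioi] at hu hv
      have h' : (u - v) * (u * v + c) = 0 := by
        have := sub_eq_zero.2 h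
        field_simp at this
        nlinarith [this]
      rcases mul_eq_zero.1 h' with h'' | h''
      · linarith [sub_eq_zero.1 h'']
      · nlinarith
    have key := MeasureTheory.integral_image_eq_integral_abs_deriv_smul
      measurableSet_Ioi hder hinj (fun t => Real.exp (-t ^ 2))
    rw [psi_image c hc, Measure.restrict_univ] at key
    have hgauss : ∫ x : ℝ, Real.exp (-x ^ 2) = Real.sqrt π := by
      have := integral_gaussian (1:ℝ)
      simpa using this
    rw [hgauss] at key
    have heq : Set.EqOn (fun u : ℝ => |1 + c / u ^ 2| • Real.exp (-(u - c / u) ^ 2))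
        (fun u : ℝ => Real.exp (2 * c) * (Real.exp (-u ^ 2 - c ^ 2 / u ^ 2)
          + (c / u ^ 2) * Real.exp (-u ^ 2 - c ^ 2 / u ^ 2))) (Set.Ioi 0) := by
      intro u hu
      simp only [Set.mem_Ioi] at hu
      have h1 : |1 + c / u ^ 2| = 1 + c / u ^ 2 := abs_of_pos (by positivity)
      have h2 : -(u - c / u) ^ 2 = (-u ^ 2 - c ^ 2 / u ^ 2) + 2 * c := by
        field_simp; ring
      show |1 + c / u ^ 2| • Real.exp (-(u - c / u) ^ 2) = _
      rw [h1, h2, Real.exp_add, smul_eq_mul]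
      ring
    rw [setIntegral_congr_fun measurableSet_Ioi heq] at key
    rw [integral_const_mul, integral_add (glasserA_integrable c) (glasserB_integrable c hc),
      ← glasser_B_eq_A c hc] at key
    have hA := key
    have : Real.exp (2 * c) ≠ 0 := Real.exp_ne_zero _
    field_simp [Real.exp_neg] at hA ⊢
    have he : Real.exp (2 * c) * Real.exp (-(2 * c)) = 1 := by rw [← Real.exp_add]; simp
    rw [hA]
    linear_combination (-2 * ∫ (a : ℝ) in Set.Ioi 0, Real.exp ((-a ^ 4 - c ^ 2) / a ^ 2)) * he


noncomputable def lev (x : ℝ) : ℝ :=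
  if 0 < x then (1 / Real.sqrt (2 * π)) * x ^ (-(3 : ℝ) / 2) * Real.exp (-1 / (2 * x)) else 0

lemma phi2_image : (fun u : ℝ => (2 * u ^ 2)⁻¹) '' Set.Ioi 0 = Set.Ioi 0 := by
  ext t
  constructor
  · rintro ⟨u, hu, rfl⟩
    simp only [Set.mem_Ioi] at hu ⊢
    positivity
  · intro ht
    simp only [Set.mem_Ioi] at ht
    refine ⟨(2 * t)⁻¹ ^ ((1:ℝ)/2), ?_, ?_⟩
    · simp only [Set.mem_Ioi]
      positivity
    · have h1 : ((2 * t)⁻¹ ^ ((1:ℝ)/2)) ^ 2 = (2 * t)⁻¹ := by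
        rw [← Real.rpow_natCast ((2 * t)⁻¹ ^ ((1:ℝ)/2)) 2, ← Real.rpow_mul (by positivity)]
        norm_num
      show (2 * ((2 * t)⁻¹ ^ ((1:ℝ)/2)) ^ 2)⁻¹ = t
      rw [h1]
      field_simp
lemma phi2_hasDeriv : ∀ u ∈ Set.Ioi (0:ℝ),
    HasDerivWithinAt (fun u : ℝ => (2 * u ^ 2)⁻¹) (-(u ^ 3)⁻¹) (Set.Ioi 0) u := by
  intro u hu
  simp only [Set.mem_Ioi] at hu
  have h1 : HasDerivAt (fun u : ℝ => (2 * u ^ 2)⁻¹) (-(4 * u) / (2 * u ^ 2) ^ 2) u := by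
    have hne : 2 * u ^ 2 ≠ 0 := by positivity
    have : HasDerivAt (fun u : ℝ => 2 * u ^ 2) (4 * u) u := by
      have := (hasDerivAt_pow 2 u).const_mul (2:ℝ)
      norm_num at this
      exact this.congr_deriv (by ring)
    exact this.inv hne
  have : -(4 * u) / (2 * u ^ 2) ^ 2 = -(u ^ 3)⁻¹ := by
    field_simp; ring
  exact (this ▸ h1).hasDerivWithinAt
lemma phi2_injOn : Set.InjOn (fun u : ℝ => (2 * u ^ 2)⁻¹) (Set.Ioi 0) := by
  intro u hu v hv h
  simp only [Set.mem_Ioi] at hu hv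
  simp only [inv_inj] at h
  have h' : u ^ 2 = v ^ 2 := by linarith
  exact (sq_eq_sq₀ hu.le hv.le).1 h'

lemma lev_eqOn (s : ℝ) (hs : 0 ≤ s) : Set.EqOn
    (fun u : ℝ => |(-(u ^ 3)⁻¹)| •
      (lev ((2 * u ^ 2)⁻¹) * Real.exp (-(s * (2 * u ^ 2)⁻¹))))
    (fun u : ℝ => (2 / Real.sqrt π) *
      Real.exp (-u ^ 2 - Real.sqrt (s / 2) ^ 2 / u ^ 2)) (Set.Ioi 0) := by
  intro u hu
  simp only [Set.mem_Ioi] at hu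
  have hx : (0:ℝ) < (2 * u ^ 2)⁻¹ := by positivity
  have h1 : |(-(u ^ 3)⁻¹)| = (u ^ 3)⁻¹ := by
    rw [abs_neg, abs_of_pos (by positivity)]
  have hrpow : ((2 * u ^ 2)⁻¹ : ℝ) ^ (-(3:ℝ) / 2) = 2 * Real.sqrt 2 * u ^ 3 := by
    have h2u : (0:ℝ) ≤ 2 * u ^ 2 := by positivity
    rw [Real.inv_rpow h2u, ← Real.rpow_neg h2u, neg_div, neg_neg]
    rw [Real.mul_rpow (by norm_num) (by positivity)]
    have ha : (2:ℝ) ^ ((3:ℝ)/2) = 2 * Real.sqrt 2 := by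
      have : ((3:ℝ)/2) = 1 + 1/2 := by norm_num
      rw [this, Real.rpow_add (by norm_num), Real.rpow_one, ← Real.sqrt_eq_rpow]
    have hb : (u ^ 2 : ℝ) ^ ((3:ℝ)/2) = u ^ 3 := by
      rw [← Real.rpow_natCast u 2, ← Real.rpow_mul hu.le]
      norm_num
    rw [ha, hb]
  have hlev : lev ((2 * u ^ 2)⁻¹) =
      (1 / Real.sqrt (2 * π)) * (2 * Real.sqrt 2 * u ^ 3) * Real.exp (-u ^ 2) := by
    rw [lev, if_pos hx, hrpow]
    congr 2
    have : (2 * u ^ 2)⁻¹ ≠ 0 := ne_of_gt hx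
    field_simp
  have hsqrt2pi : Real.sqrt (2 * π) = Real.sqrt 2 * Real.sqrt π := Real.sqrt_mul (by norm_num) _
  have hc2 : Real.sqrt (s / 2) ^ 2 = s / 2 := Real.sq_sqrt (by positivity)
  have hexp : Real.exp (-u ^ 2) * Real.exp (-(s * (2 * u ^ 2)⁻¹)) =
      Real.exp (-u ^ 2 - Real.sqrt (s / 2) ^ 2 / u ^ 2) := by
    rw [← Real.exp_add, hc2]
    congr 1
    field_simp
    ring
  have hu3 : (u ^ 3 : ℝ) ≠ 0 := by positivity
  have hsπ : Real.sqrt π ≠ 0 := by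
    simp [Real.sqrt_ne_zero']; exact Real.pi_pos
  have hs2 : Real.sqrt 2 ≠ 0 := by positivity
  show |(-(u ^ 3)⁻¹)| • (lev ((2 * u ^ 2)⁻¹) * Real.exp (-(s * (2 * u ^ 2)⁻¹))) = _
  rw [h1, hlev, smul_eq_mul, mul_assoc]
  show _ = 2 / Real.sqrt π * Real.exp (-u ^ 2 - Real.sqrt (s / 2) ^ 2 / u ^ 2)
  rw [← hexp]
  rw [hsqrt2pi]
  field_simp

lemma lev_exp_integrableOn (s : ℝ) (hs : 0 ≤ s) :
    IntegrableOn (fun x : ℝ => lev x * Real.exp (-(s * x))) (Set.Ioi 0) := by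
  have key := (MeasureTheory.integrableOn_image_iff_integrableOn_abs_deriv_smul
    measurableSet_Ioi phi2_hasDeriv phi2_injOn
    (fun x => lev x * Real.exp (-(s * x)))).2
  rw [phi2_image] at key
  apply key
  apply IntegrableOn.congr_fun _ (lev_eqOn s hs).symm measurableSet_Ioi
  exact (glasserA_integrable (Real.sqrt (s / 2))).const_mul _

lemma laplace (s : ℝ) (hs : 0 ≤ s) :
    ∫ x in Set.Ioi (0:ℝ), lev x * Real.exp (-(s * x)) = Real.exp (-Real.sqrt (2 * s)) := by
  have key := MeasureTheory.integral_image_eq_integral_abs_deriv_smul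
    measurableSet_Ioi phi2_hasDeriv phi2_injOn
    (fun x => lev x * Real.exp (-(s * x)))
  rw [phi2_image] at key
  rw [key, setIntegral_congr_fun measurableSet_Ioi (lev_eqOn s hs), integral_const_mul,
    glasser _ (Real.sqrt_nonneg _)]
  have h2 : 2 * Real.sqrt (s / 2) = Real.sqrt (2 * s) := by
    symm
    rw [show (2 * s : ℝ) = 2 ^ 2 * (s / 2) by ring, Real.sqrt_mul (by positivity),
      Real.sqrt_sq (by norm_num)]
  rw [h2]
  have hsπ : Real.sqrt π ≠ 0 := by
    simp [Real.sqrt_ne_zero']; exact Real.pi_pos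
  field_simp


lemma sqrt_neg_I_mul (ξ : ℝ) (hξ : ξ ≠ 0) :
    (Real.sqrt 2 : ℂ) * (-(Complex.I * ξ)) ^ ((1:ℂ)/2) =
      (Real.sqrt |ξ| : ℂ) * (1 - Complex.I * Real.sign ξ) := by
  have hz : (-(Complex.I * ξ) : ℂ) ≠ 0 := by
    simp [Complex.ext_iff, hξ]
  have habs : ‖(-(Complex.I * ξ))‖ = |ξ| := by
    simp [norm_neg, norm_mul, Complex.norm_real]
  have hexp : Real.exp (Real.log |ξ| / 2) = Real.sqrt |ξ| := by
    rw [← Real.log_sqrt (abs_nonneg ξ), Real.exp_log (Real.sqrt_pos.2 (abs_pos.2 hξ))]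
  have h2 : (Real.sqrt 2 : ℂ) * (Real.sqrt 2 : ℂ) = 2 := by
    rw [← Complex.ofReal_mul, Real.mul_self_sqrt (by norm_num)]
    norm_num
  rcases hξ.lt_or_gt with hneg | hpos
  · have harg : Complex.arg (-(Complex.I * ξ)) = π/2 := by
      have he : (-(Complex.I * ξ) : ℂ) = ((-ξ : ℝ) : ℂ) * Complex.I := by
        push_cast; ring
      rw [he, Complex.arg_real_mul _ (by linarith : (0:ℝ) < -ξ), Complex.arg_I]
    have hlog : Complex.log (-(Complex.I * ξ)) =
        ↑(Real.log |ξ|) + ↑(π/2) * Complex.I := by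
      apply Complex.ext
      · simp [Complex.log_re, habs]
      · simp [Complex.log_im, harg]
    rw [Complex.cpow_def_of_ne_zero hz, hlog]
    have hhalf : ((↑(Real.log |ξ|) + ↑(π/2) * Complex.I) * ((1:ℂ)/2)) =
        ↑(Real.log |ξ| / 2) + ↑(π/4) * Complex.I := by
      push_cast; ring
    rw [hhalf, Complex.exp_add, Complex.exp_mul_I, ← Complex.ofReal_exp, hexp,
      ← Complex.ofReal_cos, ← Complex.ofReal_sin,
      Real.cos_pi_div_four, Real.sin_pi_div_four, Real.sign_of_neg hneg]
    push_cast
    linear_combination (↑(Real.sqrt |ξ|) * (1 + Complex.I) / 2) * h2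
  · have harg : Complex.arg (-(Complex.I * ξ)) = -(π/2) := by
      have he : (-(Complex.I * ξ) : ℂ) = ((ξ : ℝ) : ℂ) * (-Complex.I) := by
        push_cast; ring
      rw [he, Complex.arg_real_mul _ hpos, Complex.arg_neg_I]
    have hlog : Complex.log (-(Complex.I * ξ)) =
        ↑(Real.log |ξ|) + ↑(-(π/2)) * Complex.I := by
      apply Complex.ext
      · simp [Complex.log_re, habs]
      · simp [Complex.log_im, harg]
    rw [Complex.cpow_def_of_ne_zero hz, hlog]
    have hhalf : ((↑(Real.log |ξ|) + ↑(-(π/2)) * Complex.I) * ((1:ℂ)/2)) =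
        ↑(Real.log |ξ| / 2) + ↑(-(π/4)) * Complex.I := by
      push_cast; ring
    rw [hhalf, Complex.exp_add, Complex.exp_mul_I, ← Complex.ofReal_exp, hexp,
      ← Complex.ofReal_cos, ← Complex.ofReal_sin,
      Real.cos_neg, Real.sin_neg, Real.cos_pi_div_four, Real.sin_pi_div_four,
      Real.sign_of_pos hpos]
    push_cast
    linear_combination (↑(Real.sqrt |ξ|) * (1 - Complex.I) / 2) * h2




lemma lev_nonneg (x : ℝ) : 0 ≤ lev x := by
  unfold lev
  split
  · have : (0:ℝ) < Real.sqrt (2 * π) := Real.sqrt_pos.2 (by positivity)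
    positivity
  · exact le_rfl

lemma lev_meas : Measurable lev := by
  unfold lev
  apply Measurable.ite measurableSet_Ioi _ measurable_const
  fun_prop

lemma lev_integrableOn : IntegrableOn lev (Set.Ioi 0) := by
  have h := lev_exp_integrableOn 0 le_rfl
  simpa using h

lemma lev_le_bound {x : ℝ} (hx : 0 < x) :
    lev x * x ≤ (1 / Real.sqrt (2 * π)) * x ^ (-(1:ℝ)/2) := by
  rw [lev, if_pos hx]
  have h1 : x ^ (-(3:ℝ)/2) * x = x ^ (-(1:ℝ)/2) := by
    nth_rewrite 2 [show x = x ^ (1:ℝ) by rw [Real.rpow_one]]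
    rw [← Real.rpow_add hx]
    norm_num
  have h2 : Real.exp (-1 / (2 * x)) ≤ 1 := by
    rw [Real.exp_le_one_iff]
    have : (0:ℝ) < 2 * x := by linarith
    rw [div_nonpos_iff]
    right; constructor <;> linarith
  have h3 : (0:ℝ) < Real.sqrt (2 * π) := Real.sqrt_pos.2 (by positivity)
  calc 1 / Real.sqrt (2 * π) * x ^ (-(3:ℝ)/2) * Real.exp (-1 / (2 * x)) * x
      ≤ 1 / Real.sqrt (2 * π) * x ^ (-(3:ℝ)/2) * 1 * x := by
        apply mul_le_mul_of_nonneg_right _ hx.le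
        apply mul_le_mul_of_nonneg_left h2
        positivity
    _ = 1 / Real.sqrt (2 * π) * (x ^ (-(3:ℝ)/2) * x) := by ring
    _ = 1 / Real.sqrt (2 * π) * x ^ (-(1:ℝ)/2) := by rw [h1]

lemma aux_int (δ : ℝ) (hδ : 0 < δ) :
    IntegrableOn (fun x : ℝ => x ^ (-(1:ℝ)/2) * Real.exp (-(δ * x))) (Set.Ioi 0) := by
  have hmeas : Measurable (fun x : ℝ => x ^ (-(1:ℝ)/2) * Real.exp (-(δ * x))) := by fun_prop
  rw [← Set.Ioc_union_Ioi_eq_Ioi (zero_le_one (α := ℝ))]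
  apply IntegrableOn.union
  · have hint : IntegrableOn (fun x : ℝ => x ^ (-(1:ℝ)/2)) (Set.Ioc 0 1) := by
      rw [← intervalIntegrable_iff_integrableOn_Ioc_of_le zero_le_one]
      apply intervalIntegral.intervalIntegrable_rpow'
      norm_num
    apply hint.mono' hmeas.aestronglyMeasurable
    filter_upwards [ae_restrict_mem measurableSet_Ioc] with x hx
    obtain ⟨hx0, _⟩ := hx
    rw [Real.norm_eq_abs, abs_of_nonneg (by positivity)]
    nth_rewrite 2 [show x ^ (-(1:ℝ)/2) = x ^ (-(1:ℝ)/2) * 1 by ring]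
    apply mul_le_mul_of_nonneg_left _ (by positivity)
    rw [Real.exp_le_one_iff]
    nlinarith
  · apply (exp_neg_integrableOn_Ioi 1 hδ).mono' hmeas.aestronglyMeasurable
    filter_upwards [ae_restrict_mem measurableSet_Ioi] with x hx
    simp only [Set.mem_Ioi] at hx
    have hx0 : (0:ℝ) < x := by linarith
    rw [Real.norm_eq_abs, abs_of_nonneg (by positivity), show (-δ*x : ℝ) = -(δ*x) by ring]
    nth_rewrite 2 [show Real.exp (-(δ*x)) = 1 * Real.exp (-(δ*x)) by ring]
    apply mul_le_mul_of_nonneg_right _ (Real.exp_pos _).le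
    rw [show (-(1:ℝ)/2) = -(1/2) by norm_num, Real.rpow_neg hx0.le]
    rw [inv_le_one_iff₀]
    right
    apply Real.one_le_rpow (by linarith) (by norm_num)

noncomputable def Gfun (z : ℂ) : ℂ :=
  ∫ x in Set.Ioi (0:ℝ), (lev x : ℂ) * Complex.exp (-(z * x))
noncomputable def Hfun (z : ℂ) : ℂ :=
  Complex.exp (-(Real.sqrt 2 : ℂ) * z ^ ((1:ℂ)/2))

lemma F_meas (z : ℂ) : AEStronglyMeasurable (fun x : ℝ => (lev x : ℂ) * Complex.exp (-(z * x)))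
    (volume.restrict (Set.Ioi 0)) := by
  apply Measurable.aestronglyMeasurable
  exact (Complex.measurable_ofReal.comp lev_meas).mul
    (Complex.measurable_exp.comp ((Complex.measurable_ofReal.const_mul z).neg))

lemma F_norm (z : ℂ) (x : ℝ) :
    ‖(lev x : ℂ) * Complex.exp (-(z * x))‖ = lev x * Real.exp (-(z.re * x)) := by
  rw [norm_mul, Complex.norm_real, Real.norm_eq_abs,
    Complex.norm_exp, abs_of_nonneg (lev_nonneg x)]
  congr 2
  simp [Complex.mul_re]

lemma F_integrable (z : ℂ) (hz : 0 ≤ z.re) :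
    IntegrableOn (fun x : ℝ => (lev x : ℂ) * Complex.exp (-(z * x))) (Set.Ioi 0) := by
  apply lev_integrableOn.mono' (F_meas z)
  filter_upwards [ae_restrict_mem measurableSet_Ioi] with x hx
  simp only [Set.mem_Ioi] at hx
  rw [F_norm]
  nth_rewrite 2 [show lev x = lev x * 1 by ring]
  apply mul_le_mul_of_nonneg_left _ (lev_nonneg x)
  rw [Real.exp_le_one_iff]
  simp only [neg_nonpos]
  positivity

lemma F'_meas (z : ℂ) : AEStronglyMeasurable
    (fun x : ℝ => (lev x : ℂ) * (-(x:ℂ)) * Complex.exp (-(z * x)))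
    (volume.restrict (Set.Ioi 0)) := by
  apply Measurable.aestronglyMeasurable
  exact ((Complex.measurable_ofReal.comp lev_meas).mul Complex.measurable_ofReal.neg).mul
    (Complex.measurable_exp.comp ((Complex.measurable_ofReal.const_mul z).neg))

lemma G_hasDeriv (z₀ : ℂ) (hz₀ : 0 < z₀.re) :
    HasDerivAt Gfun (∫ x in Set.Ioi (0:ℝ), (lev x : ℂ) * (-(x:ℂ)) * Complex.exp (-(z₀ * x))) z₀ := by
  set δ := z₀.re / 2 with hδ_def
  have hδ : 0 < δ := by positivity
  have key := hasDerivAt_integral_of_dominated_loc_of_deriv_le (μ := volume.restrict (Set.Ioi 0))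
    (F := fun (z : ℂ) (x : ℝ) => (lev x : ℂ) * Complex.exp (-(z * x)))
    (F' := fun (z : ℂ) (x : ℝ) => (lev x : ℂ) * (-(x:ℂ)) * Complex.exp (-(z * x)))
    (x₀ := z₀) (s := Metric.ball z₀ δ)
    (bound := fun x => (1 / Real.sqrt (2 * π)) * (x ^ (-(1:ℝ)/2) * Real.exp (-(δ * x))))
    (Metric.ball_mem_nhds z₀ hδ)
    (Eventually.of_forall fun z => F_meas z)
    (F_integrable z₀ (by linarith))
    (F'_meas z₀)
    ?_ ?_ ?_
  · exact key.2
  · -- bound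
    filter_upwards [ae_restrict_mem measurableSet_Ioi] with x hx
    simp only [Set.mem_Ioi] at hx
    intro z hz
    have hre : δ ≤ z.re := by
      have h1 := Complex.abs_re_le_norm (z - z₀)
      rw [Complex.sub_re] at h1
      rw [Metric.mem_ball, Complex.dist_eq] at hz
      have h2 := (abs_le.1 (h1.trans hz.le)).1
      rw [hδ_def]; linarith
    have hnorm : ‖(lev x : ℂ) * (-(x:ℂ)) * Complex.exp (-(z * x))‖
        = lev x * x * Real.exp (-(z.re * x)) := by
      rw [norm_mul, norm_mul, Complex.norm_real, Real.norm_eq_abs,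
        Complex.norm_exp, abs_of_nonneg (lev_nonneg x),
        norm_neg, Complex.norm_real, Real.norm_eq_abs, abs_of_pos hx]
      congr 2
      simp [Complex.mul_re]
    rw [hnorm]
    calc lev x * x * Real.exp (-(z.re * x))
        ≤ lev x * x * Real.exp (-(δ * x)) := by
          apply mul_le_mul_of_nonneg_left _ (mul_nonneg (lev_nonneg x) hx.le)
          apply Real.exp_le_exp.2
          have : δ * x ≤ z.re * x := mul_le_mul_of_nonneg_right hre hx.le
          linarith
      _ ≤ (1 / Real.sqrt (2 * π)) * x ^ (-(1:ℝ)/2) * Real.exp (-(δ * x)) :=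
          mul_le_mul_of_nonneg_right (lev_le_bound hx) (Real.exp_pos _).le
      _ = (1 / Real.sqrt (2 * π)) * (x ^ (-(1:ℝ)/2) * Real.exp (-(δ * x))) := by ring
  · exact (aux_int δ hδ).const_mul _
  · -- differentiability in z
    filter_upwards [ae_restrict_mem measurableSet_Ioi] with x hx
    intro z hz
    have h1 : HasDerivAt (fun z : ℂ => -(z * x)) (-(x:ℂ)) z := by
      exact (((hasDerivAt_id z).mul_const (x:ℂ)).neg).congr_deriv (by simp)
    have h2 := (h1.cexp).const_mul (lev x : ℂ)
    exact h2.congr_deriv (by ring)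

lemma G_analytic : AnalyticOnNhd ℂ Gfun {z : ℂ | 0 < z.re} := by
  apply DifferentiableOn.analyticOnNhd _ (isOpen_lt continuous_const Complex.continuous_re)
  intro z hz
  exact ((G_hasDeriv z hz).differentiableAt).differentiableWithinAt

lemma H_analytic : AnalyticOnNhd ℂ Hfun {z : ℂ | 0 < z.re} := by
  apply DifferentiableOn.analyticOnNhd _ (isOpen_lt continuous_const Complex.continuous_re)
  intro z hz
  apply DifferentiableAt.differentiableWithinAt
  apply DifferentiableAt.cexp
  apply DifferentiableAt.const_mul
  exact (Complex.hasStrictDerivAt_cpow_const (Or.inl hz)).hasDerivAt.differentiableAt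

lemma G_eq_H_real (s : ℝ) (hs : 0 < s) : Gfun (s : ℂ) = Hfun (s : ℂ) := by
  have h1 : Gfun (s : ℂ) = ((Real.exp (-Real.sqrt (2 * s)) : ℝ) : ℂ) := by
    have hcoe : (↑(∫ x in Set.Ioi (0:ℝ), lev x * Real.exp (-(s * x))) : ℂ)
        = ∫ x in Set.Ioi (0:ℝ), ((lev x * Real.exp (-(s * x)) : ℝ) : ℂ) := integral_ofReal.symm
    rw [Gfun, ← laplace s hs.le, hcoe]
    apply setIntegral_congr_fun measurableSet_Ioi
    intro x _
    show (↑(lev x) : ℂ) * Complex.exp (-(↑s * ↑x)) = ↑(lev x * Real.exp (-(s * x)))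
    rw [Complex.ofReal_mul, Complex.ofReal_exp]
    push_cast
    ring
  have h2 : ((s:ℂ)) ^ ((1:ℂ)/2) = ((Real.sqrt s : ℝ) : ℂ) := by
    rw [Real.sqrt_eq_rpow, Complex.ofReal_cpow hs.le]
    norm_num
  rw [h1, Hfun, h2, Complex.ofReal_exp]
  congr 1
  rw [Real.sqrt_mul (by norm_num : (0:ℝ) ≤ 2) s]
  push_cast
  ring

lemma GH_eq : Set.EqOn Gfun Hfun {z : ℂ | 0 < z.re} := by
  apply AnalyticOnNhd.eqOn_of_preconnected_of_frequently_eq G_analytic H_analytic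
    ((convex_halfSpace_re_gt (0:ℝ)).isPreconnected) (z₀ := 1) (by norm_num : (1:ℂ) ∈ _)
  have hseq : Tendsto (fun n : ℕ => (((1 + 1/(n+1) : ℝ)) : ℂ)) atTop (𝓝[≠] (1:ℂ)) := by
    apply tendsto_nhdsWithin_of_tendsto_nhds_of_eventually_within
    · have : Tendsto (fun n : ℕ => (1 + 1/(n+1) : ℝ)) atTop (𝓝 1) := by
        have := tendsto_one_div_add_atTop_nhds_zero_nat (𝕜 := ℝ)
        have h := this.const_add (1:ℝ)
        simpa using h
      have h' := (Complex.continuous_ofReal.tendsto 1).comp this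
      simpa only [Function.comp_def, Complex.ofReal_one] using h'
    · apply Eventually.of_forall
      intro n
      simp only [Set.mem_compl_iff, Set.mem_singleton_iff]
      intro h
      have : (1 + 1/(n+1) : ℝ) = 1 := by exact_mod_cast h
      have hn : (0:ℝ) < 1/(n+1) := by positivity
      linarith
  apply hseq.frequently
  apply Filter.Eventually.frequently
  apply Eventually.of_forall
  intro n
  exact G_eq_H_real _ (by positivity)

lemma charfn_pos (ξ : ℝ) (hξ : ξ ≠ 0) :
    ∫ x in Set.Ioi (0:ℝ), (lev x : ℂ) * Complex.exp (Complex.I * ξ * x)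
      = Hfun (-(Complex.I * ξ)) := by
  set zseq : ℕ → ℂ := fun n => ((1/(n+1) : ℝ) : ℂ) - Complex.I * ξ with hz_def
  have hre : ∀ n : ℕ, (zseq n).re = 1/(n+1) := by
    intro n
    simp only [hz_def, Complex.sub_re, Complex.ofReal_re, Complex.mul_re, Complex.I_re,
      Complex.I_im, Complex.ofReal_im]
    ring
  have hpos : ∀ n, 0 < (zseq n).re := by
    intro n; rw [hre]; positivity
  have hlim : Tendsto zseq atTop (𝓝 (-(Complex.I * ξ))) := by
    have h0 : Tendsto (fun n : ℕ => ((1/(n+1) : ℝ) : ℂ)) atTop (𝓝 0) := by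
      have := tendsto_one_div_add_atTop_nhds_zero_nat (𝕜 := ℝ)
      have h' := (Complex.continuous_ofReal.tendsto 0).comp this
      simpa only [Function.comp_def, Complex.ofReal_zero] using h'
    have := h0.sub_const (Complex.I * ξ)
    simpa only [zero_sub] using this
  have h1 : Tendsto (fun n => Gfun (zseq n)) atTop
      (𝓝 (∫ x in Set.Ioi (0:ℝ), (lev x : ℂ) * Complex.exp (Complex.I * ξ * x))) := by
    apply tendsto_integral_of_dominated_convergence lev (fun n => F_meas (zseq n))
      lev_integrableOn
    · intro n
      filter_upwards [ae_restrict_mem measurableSet_Ioi] with x hx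
      simp only [Set.mem_Ioi] at hx
      rw [F_norm]
      nth_rewrite 2 [show lev x = lev x * 1 by ring]
      apply mul_le_mul_of_nonneg_left _ (lev_nonneg x)
      rw [Real.exp_le_one_iff]
      have := hpos n
      simp only [neg_nonpos]
      positivity
    · filter_upwards [ae_restrict_mem measurableSet_Ioi] with x hx
      have hc : Tendsto (fun n => -(zseq n * x)) atTop (𝓝 (-(-(Complex.I * ξ) * x))) :=
        (hlim.mul_const (x:ℂ)).neg
      have he := (Complex.continuous_exp.tendsto _).comp hc
      have hm := he.const_mul ((lev x : ℝ) : ℂ)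
      have harg : -(-(Complex.I * ξ) * x) = Complex.I * ξ * x := by ring
      rw [harg] at hm
      exact hm
  have h2 : Tendsto (fun n => Hfun (zseq n)) atTop (𝓝 (Hfun (-(Complex.I * ξ)))) := by
    have hslit : (-(Complex.I * ξ) : ℂ) ∈ Complex.slitPlane := by
      rw [Complex.mem_slitPlane_iff]
      right
      simp [hξ]
    have hc1 : ContinuousAt (fun z : ℂ => z ^ ((1:ℂ)/2)) (-(Complex.I * ξ)) :=
      continuousAt_cpow_const hslit
    have hcont : ContinuousAt Hfun (-(Complex.I * ξ)) := by
      apply Complex.continuous_exp.continuousAt.comp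
      exact (continuousAt_const.mul hc1)
    exact hcont.tendsto.comp hlim
  have h3 : ∀ n, Gfun (zseq n) = Hfun (zseq n) := fun n => GH_eq (hpos n)
  exact tendsto_nhds_unique (Filter.Tendsto.congr h3 h1) h2

/-- the measure with density `(1/√(2π)) x^{−3/2} e^{−1/(2x)}` on `(0,∞)` has
characteristic function `exp(−|ξ|^{1/2}(1 − i·sgn ξ))`, i.e. it is the one-sided stable
distribution of exponent `1/2`. -/
theorem levy_density_charFn
    (μ : Measure ℝ)
    (hμ : μ = volume.withDensity
      (fun x : ℝ => ENNReal.ofReal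
        (if 0 < x then (1 / Real.sqrt (2 * π)) * x ^ (-(3 : ℝ) / 2) * Real.exp (-1 / (2 * x))
         else 0))) :
    ∀ ξ : ℝ,
      ∫ x, Complex.exp (Complex.I * ξ * x) ∂μ =
        Complex.exp (-(|ξ| ^ ((1 : ℝ) / 2) : ℝ) * (1 - Complex.I * Real.sign ξ)) := by
  intro ξ
  have hdens : (fun x : ℝ => ENNReal.ofReal
      (if 0 < x then (1 / Real.sqrt (2 * π)) * x ^ (-(3 : ℝ) / 2) * Real.exp (-1 / (2 * x))
       else 0)) = fun x => ((lev x).toNNReal : ENNReal) := by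
    funext x
    rw [lev]
    rfl
  rw [hμ, hdens, integral_withDensity_eq_integral_smul lev_meas.real_toNNReal]
  have hsm : (fun x : ℝ => (lev x).toNNReal • Complex.exp (Complex.I * ξ * x))
      = fun x => (lev x : ℂ) * Complex.exp (Complex.I * ξ * x) := by
    funext x
    rw [NNReal.smul_def, Real.coe_toNNReal _ (lev_nonneg x), Complex.real_smul]
  rw [hsm]
  have hzero : ∀ x ∉ Set.Ioi (0:ℝ), (lev x : ℂ) * Complex.exp (Complex.I * ξ * x) = 0 := by
    intro x hx
    simp only [Set.mem_Ioi, not_lt] at hx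
    rw [lev, if_neg (not_lt.2 hx)]
    simp
  rw [← setIntegral_eq_integral_of_forall_compl_eq_zero hzero]
  rcases eq_or_ne ξ 0 with rfl | hξ
  · have hcongr : ∀ x ∈ Set.Ioi (0:ℝ), (lev x : ℂ) * Complex.exp (Complex.I * (0:ℝ) * x)
        = ((lev x * Real.exp (-(0 * x)) : ℝ) : ℂ) := by
      intro x _
      push_cast
      simp
    have hcoe : (∫ x in Set.Ioi (0:ℝ), ((lev x * Real.exp (-(0 * x)) : ℝ) : ℂ))
        = ↑(∫ x in Set.Ioi (0:ℝ), lev x * Real.exp (-(0 * x))) := integral_ofReal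
    rw [setIntegral_congr_fun measurableSet_Ioi hcongr, hcoe, laplace 0 le_rfl]
    simp [Real.sign_zero]
  · rw [charfn_pos ξ hξ, Hfun]
    have hkey := sqrt_neg_I_mul ξ hξ
    have hr : (|ξ| ^ ((1:ℝ)/2)) = Real.sqrt |ξ| := (Real.sqrt_eq_rpow _).symm
    have h1 : -(Real.sqrt 2 : ℂ) * (-(Complex.I * ξ)) ^ ((1:ℂ)/2)
        = -(↑(|ξ| ^ ((1:ℝ)/2)) : ℂ) * (1 - Complex.I * Real.sign ξ) := by
      rw [hr]
      push_cast
      linear_combination -hkey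
    rw [h1]
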